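/- arXiv:1408.0157 — 2 statements merged into one kernel-verified Lean document; each statement's English description precedes it below -/
import Mathlib

section
/- Let μ : (0,∞) → ℝ be Lebesgue integrable. Then for every ω ∈ ℝ, the function y ↦ (2(cos(ωy) − 1)/y²)·μ(y) is integrable on (0,∞) and [𝒢₂μ](ω) := ∫₀^∞ (2(cos(ωy) − 1)/y²) μ(y) dy = −2·Re ∫₀^ω ∫₀^η μ̂(ζ) dζ dη, where the iterated integrals on the right are oriented integrals. -/
open MeasureTheory Complex

lemma expDeriv' (t : ℝ) (y : ℝ) :
    HasDerivAt (fun s : ℝ => Complex.exp (-Complex.I * s * y))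
      (Complex.exp (-Complex.I * t * y) * (-Complex.I * y)) t := by
  have h : HasDerivAt (fun z : ℂ => Complex.exp (-Complex.I * z * y))
      (Complex.exp (-Complex.I * (t:ℂ) * y) * (-Complex.I * y)) (t:ℂ) := by
    have h0 : HasDerivAt (fun z : ℂ => -Complex.I * z * (y:ℂ)) (-Complex.I * y) (t:ℂ) := by
      simpa using ((hasDerivAt_id (t:ℂ)).const_mul (-Complex.I)).mul_const (y:ℂ)
    exact h0.cexp
  exact h.comp_ofReal

lemma expA' (θ : ℝ) : ‖Complex.exp (θ * Complex.I) - 1‖ ≤ |θ| := by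
  have hd : ∀ t : ℝ, HasDerivAt (fun s : ℝ => Complex.exp (s * Complex.I))
      (Complex.exp (t * Complex.I) * Complex.I) t := by
    intro t
    have h : HasDerivAt (fun z : ℂ => Complex.exp (z * Complex.I))
        (Complex.exp ((t:ℂ) * Complex.I) * Complex.I) (t:ℂ) := by
      simpa using ((hasDerivAt_id (t:ℂ)).mul_const Complex.I).cexp
    exact h.comp_ofReal
  have key : (∫ t in (0:ℝ)..θ, Complex.exp (t * Complex.I) * Complex.I)
      = Complex.exp (θ * Complex.I) - 1 := by
    rw [intervalIntegral.integral_eq_sub_of_hasDerivAt (fun t _ => hd t)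
      (Continuous.intervalIntegrable (by continuity) 0 θ)]
    simp
  calc ‖Complex.exp (θ * Complex.I) - 1‖
      = ‖∫ t in (0:ℝ)..θ, Complex.exp (t * Complex.I) * Complex.I‖ := by rw [key]
    _ ≤ 1 * |θ - 0| := by
        apply intervalIntegral.norm_integral_le_of_norm_le_const
        intro t _
        simp [Complex.norm_exp_ofReal_mul_I]
    _ = |θ| := by simp

lemma expB' (θ : ℝ) : ‖Complex.exp (θ * Complex.I) - 1 - θ * Complex.I‖ ≤ θ ^ 2 := by
  have hd : ∀ t : ℝ, HasDerivAt (fun s : ℝ => Complex.exp (s * Complex.I) - 1 - s * Complex.I)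
      (Complex.exp (t * Complex.I) * Complex.I - Complex.I) t := by
    intro t
    have h1 : HasDerivAt (fun s : ℝ => Complex.exp (s * Complex.I))
        (Complex.exp (t * Complex.I) * Complex.I) t := by
      have h : HasDerivAt (fun z : ℂ => Complex.exp (z * Complex.I))
          (Complex.exp ((t:ℂ) * Complex.I) * Complex.I) (t:ℂ) := by
        simpa using ((hasDerivAt_id (t:ℂ)).mul_const Complex.I).cexp
      exact h.comp_ofReal
    have h2 : HasDerivAt (fun s : ℝ => (s : ℂ) * Complex.I) Complex.I t := by
      simpa using (Complex.ofRealCLM.hasDerivAt (x := t)).mul_const Complex.I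
    exact (h1.sub_const 1).sub h2
  have key : (∫ t in (0:ℝ)..θ, (Complex.exp (t * Complex.I) * Complex.I - Complex.I))
      = Complex.exp (θ * Complex.I) - 1 - θ * Complex.I := by
    rw [intervalIntegral.integral_eq_sub_of_hasDerivAt (fun t _ => hd t)
      (Continuous.intervalIntegrable (by continuity) 0 θ)]
    simp
  calc ‖Complex.exp (θ * Complex.I) - 1 - θ * Complex.I‖
      = ‖∫ t in (0:ℝ)..θ, (Complex.exp (t * Complex.I) * Complex.I - Complex.I)‖ := by rw [key]
    _ ≤ |θ| * |θ - 0| := by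
        apply intervalIntegral.norm_integral_le_of_norm_le_const
        intro t ht
        have h1 : ‖Complex.exp (t * Complex.I) * Complex.I - Complex.I‖
            = ‖Complex.exp (t * Complex.I) - 1‖ := by
          rw [show Complex.exp (t * Complex.I) * Complex.I - Complex.I
            = (Complex.exp (t * Complex.I) - 1) * Complex.I by ring]
          simp
        have h2 : |t| ≤ |θ| := by
          rcases Set.mem_uIoc.1 ht with h | h
          · rw [abs_of_pos h.1, abs_of_pos (h.1.trans_le h.2)]; exact h.2
          · rw [abs_of_nonpos h.2, abs_of_neg (h.1.trans_le h.2)]; linarith [h.1]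
        rw [h1]; exact (expA' t).trans h2
    _ = θ ^ 2 := by rw [sub_zero, ← abs_mul, ← sq, abs_sq]

noncomputable def K1 (ζ y : ℝ) : ℂ :=
  (1 - Complex.exp (-Complex.I * ζ * y)) / (Complex.I * y)

noncomputable def K2 (ω y : ℝ) : ℂ :=
  (1 - Complex.I * ω * y - Complex.exp (-Complex.I * ω * y)) / (y:ℂ)^2

lemma Eker_eq (ζ y : ℝ) :
    Complex.exp (-Complex.I * ζ * y) = Complex.exp (((-(ζ * y) : ℝ) : ℂ) * Complex.I) := by
  push_cast; ring_nf

lemma normE' (ζ y : ℝ) : ‖Complex.exp (-Complex.I * ζ * y)‖ = 1 := by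
  rw [Eker_eq, Complex.norm_exp_ofReal_mul_I]

lemma bK1' {y : ℝ} (hy : 0 < y) (ζ : ℝ) : ‖K1 ζ y‖ ≤ |ζ| := by
  have h1 : ‖1 - Complex.exp (-Complex.I * ζ * y)‖ ≤ |ζ| * y := by
    rw [Eker_eq]
    calc ‖1 - Complex.exp (((-(ζ * y) : ℝ) : ℂ) * Complex.I)‖
        = ‖Complex.exp (((-(ζ * y) : ℝ) : ℂ) * Complex.I) - 1‖ := by rw [norm_sub_rev]
      _ ≤ |(-(ζ * y))| := expA' _
      _ = |ζ| * y := by rw [abs_neg, abs_mul, abs_of_pos hy]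
  have h2 : ‖Complex.I * (y:ℂ)‖ = y := by
    simp [abs_of_pos hy]
  rw [K1, norm_div, h2, div_le_iff₀ hy]
  exact h1

lemma bK2' {y : ℝ} (hy : 0 < y) (ω : ℝ) : ‖K2 ω y‖ ≤ ω ^ 2 := by
  have hnum : (1 : ℂ) - Complex.I * ω * y - Complex.exp (-Complex.I * ω * y)
      = -(Complex.exp (((-(ω * y) : ℝ) : ℂ) * Complex.I) - 1 - ((-(ω * y) : ℝ) : ℂ) * Complex.I) := by
    rw [← Eker_eq]; push_cast; ring
  have h1 : ‖(1 : ℂ) - Complex.I * ω * y - Complex.exp (-Complex.I * ω * y)‖ ≤ ω ^ 2 * y ^ 2 := by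
    rw [hnum, norm_neg]
    calc ‖_‖ ≤ (-(ω * y)) ^ 2 := expB' _
      _ = ω ^ 2 * y ^ 2 := by ring
  have h2 : ‖((y:ℂ))^2‖ = y ^ 2 := by
    rw [norm_pow]; simp [abs_of_pos hy]
  rw [K2, norm_div, h2, div_le_iff₀ (by positivity)]
  exact h1

lemma dK1' {y : ℝ} (hy : y ≠ 0) (ζ : ℝ) :
    HasDerivAt (fun ζ : ℝ => K1 ζ y) (Complex.exp (-Complex.I * ζ * y)) ζ := by
  have hy' : (y : ℂ) ≠ 0 := Complex.ofReal_ne_zero.2 hy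
  have hIy : Complex.I * (y:ℂ) ≠ 0 := mul_ne_zero Complex.I_ne_zero hy'
  have h := ((expDeriv' ζ y).const_sub 1).div_const (Complex.I * (y:ℂ))
  refine h.congr_deriv ?_
  symm; rw [eq_div_iff hIy]; ring

lemma dK2' {y : ℝ} (hy : y ≠ 0) (ω : ℝ) :
    HasDerivAt (fun ω : ℝ => K2 ω y) (K1 ω y) ω := by
  have hy' : (y : ℂ) ≠ 0 := Complex.ofReal_ne_zero.2 hy
  have hIy : Complex.I * (y:ℂ) ≠ 0 := mul_ne_zero Complex.I_ne_zero hy'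
  have hlin : HasDerivAt (fun s : ℝ => (1 : ℂ) - Complex.I * s * y) (-(Complex.I * y)) ω := by
    have h0 : HasDerivAt (fun s : ℝ => (s : ℂ)) 1 ω := Complex.ofRealCLM.hasDerivAt
    simpa using ((h0.const_mul Complex.I).mul_const (y:ℂ)).const_sub 1
  have h := (hlin.sub (expDeriv' ω y)).div_const ((y:ℂ)^2)
  refine h.congr_deriv ?_
  symm; rw [K1, div_eq_div_iff hIy (pow_ne_zero 2 hy')]
  linear_combination ((1 - Complex.exp (-Complex.I * ω * y)) * (y:ℂ)^2) * Complex.I_sq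

lemma reK2' (ω y : ℝ) : (K2 ω y).re = (1 - Real.cos (ω * y)) / y ^ 2 := by
  have h1 : ((y:ℂ))^2 = ((y^2 : ℝ) : ℂ) := by push_cast; ring
  have h2 : Complex.I * (ω:ℂ) * (y:ℂ) = ((ω * y : ℝ) : ℂ) * Complex.I := by push_cast; ring
  rw [K2, h1, Complex.div_ofReal_re,
    show -Complex.I * (ω:ℂ) * (y:ℂ) = ((-(ω*y) : ℝ):ℂ) * Complex.I by push_cast; ring,
    Complex.sub_re, Complex.sub_re, Complex.one_re, Complex.exp_ofReal_mul_I_re,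
    Real.cos_neg, h2, Complex.mul_I_re]
  simp



lemma cosbound (t : ℝ) : |Real.cos t - 1| ≤ t ^ 2 := by
  have h1 : (Complex.exp (t * Complex.I) - 1 - t * Complex.I).re = Real.cos t - 1 := by
    simp [Complex.sub_re, Complex.exp_ofReal_mul_I_re, Complex.mul_I_re]
  calc |Real.cos t - 1| = |(Complex.exp (t * Complex.I) - 1 - t * Complex.I).re| := by rw [h1]
    _ ≤ ‖Complex.exp (t * Complex.I) - 1 - t * Complex.I‖ := Complex.abs_re_le_norm _
    _ ≤ t ^ 2 := expB' t

noncomputable def Fhat (μ : ℝ → ℝ) (ζ : ℝ) : ℂ :=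
  ∫ y in Set.Ioi (0:ℝ), (μ y : ℂ) * Complex.exp (-Complex.I * ζ * y)

noncomputable def Hfun (μ : ℝ → ℝ) (η : ℝ) : ℂ :=
  ∫ y in Set.Ioi (0:ℝ), (μ y : ℂ) * K1 η y

noncomputable def Kfun (μ : ℝ → ℝ) (ω : ℝ) : ℂ :=
  ∫ y in Set.Ioi (0:ℝ), (μ y : ℂ) * K2 ω y

lemma hμc {μ : ℝ → ℝ} (hμ : IntegrableOn μ (Set.Ioi 0)) : AEStronglyMeasurable (fun y => (μ y : ℂ)) (volume.restrict (Set.Ioi 0)) :=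
  Complex.continuous_ofReal.comp_aestronglyMeasurable hμ.aestronglyMeasurable

lemma contK1y (η : ℝ) : ContinuousOn (fun y : ℝ => K1 η y) (Set.Ioi 0) := by
  apply ContinuousOn.div
  · fun_prop
  · fun_prop
  · intro y hy
    exact mul_ne_zero Complex.I_ne_zero (Complex.ofReal_ne_zero.2 (ne_of_gt hy))

lemma contK2y (ω : ℝ) : ContinuousOn (fun y : ℝ => K2 ω y) (Set.Ioi 0) := by
  apply ContinuousOn.div
  · fun_prop
  · fun_prop
  · intro y hy
    exact pow_ne_zero 2 (Complex.ofReal_ne_zero.2 (ne_of_gt hy))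

lemma mK1 {μ : ℝ → ℝ} (hμ : IntegrableOn μ (Set.Ioi 0)) (η : ℝ) : AEStronglyMeasurable (fun y => (μ y : ℂ) * K1 η y)
    (volume.restrict (Set.Ioi 0)) :=
  (hμc hμ).mul ((contK1y η).aestronglyMeasurable measurableSet_Ioi)

lemma mK2 {μ : ℝ → ℝ} (hμ : IntegrableOn μ (Set.Ioi 0)) (ω : ℝ) : AEStronglyMeasurable (fun y => (μ y : ℂ) * K2 ω y)
    (volume.restrict (Set.Ioi 0)) :=
  (hμc hμ).mul ((contK2y ω).aestronglyMeasurable measurableSet_Ioi)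

lemma mE {μ : ℝ → ℝ} (hμ : IntegrableOn μ (Set.Ioi 0)) (ζ : ℝ) : AEStronglyMeasurable (fun y => (μ y : ℂ) * Complex.exp (-Complex.I * ζ * y))
    (volume.restrict (Set.Ioi 0)) :=
  (hμc hμ).mul (Continuous.aestronglyMeasurable (by fun_prop))

lemma intK1 {μ : ℝ → ℝ} (hμ : IntegrableOn μ (Set.Ioi 0)) (η : ℝ) : Integrable (fun y => (μ y : ℂ) * K1 η y)
    (volume.restrict (Set.Ioi 0)) := by
  refine Integrable.mono' (hμ.norm.const_mul |η|) (mK1 hμ η) ?_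
  rw [ae_restrict_iff' measurableSet_Ioi]
  refine Filter.Eventually.of_forall fun y hy => ?_
  rw [norm_mul, Complex.norm_real]
  calc ‖μ y‖ * ‖K1 η y‖ ≤ ‖μ y‖ * |η| := by
        exact mul_le_mul_of_nonneg_left (bK1' hy η) (norm_nonneg _)
    _ = |η| * ‖μ y‖ := by ring

lemma intK2 {μ : ℝ → ℝ} (hμ : IntegrableOn μ (Set.Ioi 0)) (ω : ℝ) : Integrable (fun y => (μ y : ℂ) * K2 ω y)
    (volume.restrict (Set.Ioi 0)) := by
  refine Integrable.mono' (hμ.norm.const_mul (ω ^ 2)) (mK2 hμ ω) ?_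
  rw [ae_restrict_iff' measurableSet_Ioi]
  refine Filter.Eventually.of_forall fun y hy => ?_
  rw [norm_mul, Complex.norm_real]
  calc ‖μ y‖ * ‖K2 ω y‖ ≤ ‖μ y‖ * ω ^ 2 := by
        exact mul_le_mul_of_nonneg_left (bK2' hy ω) (norm_nonneg _)
    _ = ω ^ 2 * ‖μ y‖ := by ring

lemma hH {μ : ℝ → ℝ} (hμ : IntegrableOn μ (Set.Ioi 0)) (η : ℝ) : HasDerivAt (Hfun μ) (Fhat μ η) η := by
  refine (hasDerivAt_integral_of_dominated_loc_of_deriv_le (s := Metric.ball η 1) (Metric.ball_mem_nhds η one_pos)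
    (F := fun x y => (μ y : ℂ) * K1 x y)
    (F' := fun x y => (μ y : ℂ) * Complex.exp (-Complex.I * x * y))
    (bound := fun y => ‖μ y‖)
    (Filter.Eventually.of_forall fun x => mK1 hμ x) (intK1 hμ η) (mE hμ η) ?_ hμ.norm ?_).2
  · refine Filter.Eventually.of_forall fun y => fun x _ => ?_
    rw [norm_mul, Complex.norm_real, normE', mul_one]
  · rw [ae_restrict_iff' measurableSet_Ioi]
    refine Filter.Eventually.of_forall fun y hy => fun x _ => ?_
    exact (dK1' (ne_of_gt hy) x).const_mul ((μ y : ℂ))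

lemma hK {μ : ℝ → ℝ} (hμ : IntegrableOn μ (Set.Ioi 0)) (ω₀ : ℝ) : HasDerivAt (Kfun μ) (Hfun μ ω₀) ω₀ := by
  refine (hasDerivAt_integral_of_dominated_loc_of_deriv_le (s := Metric.ball ω₀ 1) (Metric.ball_mem_nhds ω₀ one_pos)
    (F := fun x y => (μ y : ℂ) * K2 x y)
    (F' := fun x y => (μ y : ℂ) * K1 x y)
    (bound := fun y => (|ω₀| + 1) * ‖μ y‖)
    (Filter.Eventually.of_forall fun x => mK2 hμ x) (intK2 hμ ω₀) (mK1 hμ ω₀) ?_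
    (hμ.norm.const_mul _) ?_).2
  · rw [ae_restrict_iff' measurableSet_Ioi]
    refine Filter.Eventually.of_forall fun y hy => fun x hx => ?_
    rw [norm_mul, Complex.norm_real]
    have hxb : |x| ≤ |ω₀| + 1 := by
      have := Metric.mem_ball.1 hx
      rw [Real.dist_eq] at this
      have := abs_sub_abs_le_abs_sub x ω₀
      linarith
    calc ‖μ y‖ * ‖K1 x y‖ ≤ ‖μ y‖ * (|ω₀| + 1) :=
          mul_le_mul_of_nonneg_left ((bK1' hy x).trans hxb) (norm_nonneg _)
      _ = (|ω₀| + 1) * ‖μ y‖ := by ring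
  · rw [ae_restrict_iff' measurableSet_Ioi]
    refine Filter.Eventually.of_forall fun y hy => fun x _ => ?_
    exact (dK2' (ne_of_gt hy) x).const_mul ((μ y : ℂ))

lemma contFhat {μ : ℝ → ℝ} (hμ : IntegrableOn μ (Set.Ioi 0)) : Continuous (Fhat μ) := by
  refine continuous_of_dominated (fun x => mE hμ x) (fun x => ?_) hμ.norm ?_
  · refine Filter.Eventually.of_forall fun y => ?_
    rw [norm_mul, Complex.norm_real, normE', mul_one]
  · exact Filter.Eventually.of_forall fun y => by fun_prop

lemma step1 {μ : ℝ → ℝ} (hμ : IntegrableOn μ (Set.Ioi 0)) (η : ℝ) : (∫ ζ in (0:ℝ)..η, Fhat μ ζ) = Hfun μ η := by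
  rw [intervalIntegral.integral_eq_sub_of_hasDerivAt (fun t _ => hH hμ t)
    ((contFhat hμ).intervalIntegrable 0 η)]
  have h0 : Hfun μ 0 = 0 := by
    unfold Hfun
    have : ∀ y : ℝ, (μ y : ℂ) * K1 0 y = 0 := by
      intro y; simp [K1]
    simp [this]
  rw [h0, sub_zero]

lemma contH {μ : ℝ → ℝ} (hμ : IntegrableOn μ (Set.Ioi 0)) : Continuous (Hfun μ) :=
  continuous_iff_continuousAt.2 fun η => (hH hμ η).continuousAt

lemma step2 {μ : ℝ → ℝ} (hμ : IntegrableOn μ (Set.Ioi 0)) (ω : ℝ) : (∫ η in (0:ℝ)..ω, Hfun μ η) = Kfun μ ω := by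
  rw [intervalIntegral.integral_eq_sub_of_hasDerivAt (fun t _ => hK hμ t)
    ((contH hμ).intervalIntegrable 0 ω)]
  have h0 : Kfun μ 0 = 0 := by
    unfold Kfun
    have : ∀ y : ℝ, (μ y : ℂ) * K2 0 y = 0 := by
      intro y; simp [K2]
    simp [this]
  rw [h0, sub_zero]

theorem stmt3 (μ : ℝ → ℝ) (hμ : IntegrableOn μ (Set.Ioi 0)) (ω : ℝ) :
    IntegrableOn (fun y : ℝ => (2 * (Real.cos (ω * y) - 1) / y^2) * μ y) (Set.Ioi 0) ∧
    ∫ y in Set.Ioi (0:ℝ), (2 * (Real.cos (ω * y) - 1) / y^2) * μ y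
      = -2 * (∫ η in (0:ℝ)..ω, ∫ ζ in (0:ℝ)..η,
            ∫ y in Set.Ioi (0:ℝ), (μ y : ℂ) * Complex.exp (-Complex.I * ζ * y)).re := by
  have hpt : ∀ y ∈ Set.Ioi (0:ℝ),
      (2 * (Real.cos (ω * y) - 1) / y^2) * μ y = -2 * ((μ y : ℂ) * K2 ω y).re := by
    intro y hy
    have hy0 : y ≠ 0 := ne_of_gt hy
    rw [show ((μ y : ℂ) * K2 ω y).re = μ y * (K2 ω y).re by simp [Complex.mul_re]]
    rw [reK2' ω y]
    field_simp
    ring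
  constructor
  · -- integrability
    refine Integrable.mono' (hμ.norm.const_mul (2 * ω ^ 2)) ?_ ?_
    · refine AEStronglyMeasurable.mul ?_ hμ.aestronglyMeasurable
      refine ContinuousOn.aestronglyMeasurable ?_ measurableSet_Ioi
      apply ContinuousOn.div
      · fun_prop
      · fun_prop
      · intro y hy; exact pow_ne_zero 2 (ne_of_gt hy)
    · rw [ae_restrict_iff' measurableSet_Ioi]
      refine Filter.Eventually.of_forall fun y hy => ?_
      have hy0 : (0:ℝ) < y := hy
      rw [Real.norm_eq_abs, abs_mul, abs_div]
      have h1 : |2 * (Real.cos (ω * y) - 1)| ≤ 2 * (ω * y) ^ 2 := by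
        rw [abs_mul, show |(2:ℝ)| = 2 by norm_num]
        have := cosbound (ω * y)
        linarith
      have h2 : |y ^ 2| = y ^ 2 := abs_of_pos (by positivity)
      rw [h2, Real.norm_eq_abs]
      calc |2 * (Real.cos (ω * y) - 1)| / y ^ 2 * |μ y|
          ≤ (2 * (ω * y) ^ 2) / y ^ 2 * |μ y| := by
            gcongr
        _ = 2 * ω ^ 2 * |μ y| := by
            field_simp
  · -- equality
    have e1 : (∫ η in (0:ℝ)..ω, ∫ ζ in (0:ℝ)..η,
        ∫ y in Set.Ioi (0:ℝ), (μ y : ℂ) * Complex.exp (-Complex.I * ζ * y)) = Kfun μ ω := by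
      rw [← step2 hμ ω]
      apply intervalIntegral.integral_congr
      intro η _
      exact step1 hμ η
    rw [e1]
    have e2 : (Kfun μ ω).re = ∫ y in Set.Ioi (0:ℝ), ((μ y : ℂ) * K2 ω y).re := by
      unfold Kfun
      simpa using (Complex.reCLM.integral_comp_comm (intK2 hμ ω)).symm
    rw [e2, ← MeasureTheory.integral_const_mul]
    exact setIntegral_congr_fun measurableSet_Ioi hpt
end

section
/- Let r > 0. Define G_r(ν) = ∫_0^ν sinc(η)·exp(−η²/(2r²)) dη for ν ∈ ℝ and F_SG(ω) = ∫_ℝ sinc(x)·exp(−x²/(2r²))·e^{−iωx} dx, where sinc(x) = sin(πx)/(πx) for x ≠ 0 and sinc(0) = 1. Then for every integer k, the function ω ↦ F_SG(ω)·sinc(ω/(2π))·e^{iω/2}·e^{ikω} is integrable on ℝ and G_r(k+1) − G_r(k) = (1/(2π)) ∫_ℝ F_SG(ω)·sinc(ω/(2π))·e^{iω/2}·e^{ikω} dω. -/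
open MeasureTheory Real Complex FourierTransform
open scoped Convolution

noncomputable def sincg (x : ℝ) : ℝ :=
  if x = 0 then 1 else Real.sin (Real.pi * x) / (Real.pi * x)

lemma sincg_even (x : ℝ) : sincg (-x) = sincg x := by
  unfold sincg
  rcases eq_or_ne x 0 with rfl | hx
  · simp
  · rw [if_neg (neg_ne_zero.2 hx), if_neg hx, mul_neg, Real.sin_neg, neg_div_neg_eq]

lemma abs_sincg_le_one (x : ℝ) : |sincg x| ≤ 1 := by
  unfold sincg
  rcases eq_or_ne x 0 with rfl | hx
  · simp
  · rw [if_neg hx, abs_div]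
    rw [div_le_one (abs_pos.2 (by positivity))]
    exact Real.abs_sin_le_abs

lemma measurable_sincg : Measurable sincg := by
  unfold sincg
  exact Measurable.ite (by simpa using (measurableSet_singleton (0:ℝ))) measurable_const
    ((measurable_const.mul measurable_id).sin.div (measurable_const.mul measurable_id))

lemma fourier_icc (a : ℝ) (x : ℝ) :
    (𝓕 ((Set.Icc a (a+1)).indicator (fun _ : ℝ => (1:ℂ)))) x
      = (sincg x : ℂ) * Complex.exp ((-(Real.pi * (2*a+1) * x) : ℝ) * Complex.I) := by
  rw [Real.fourier_real_eq_integral_exp_smul]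
  have h1 : (∫ v : ℝ, Complex.exp (↑(-2 * π * v * x) * Complex.I) •
      ((Set.Icc a (a+1)).indicator (fun _ : ℝ => (1:ℂ)) v))
      = ∫ v in a..(a+1), Complex.exp ((↑(-2 * π * x) * Complex.I) * v) := by
    rw [intervalIntegral.integral_of_le (by linarith : a ≤ a + 1),
      ← MeasureTheory.integral_Icc_eq_integral_Ioc, ← integral_indicator measurableSet_Icc]
    congr 1
    funext v
    simp only [Set.indicator_apply, smul_eq_mul, mul_ite, mul_one, mul_zero]
    split
    · congr 1; push_cast; ring
    · rfl
  rw [h1]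
  rcases eq_or_ne x 0 with rfl | hx
  · norm_num [sincg]
  · have hπx : (π * x) ≠ 0 := by positivity
    have hc : ((↑(-2 * π * x) : ℂ) * Complex.I) ≠ 0 :=
      mul_ne_zero (Complex.ofReal_ne_zero.2
        (mul_ne_zero (mul_ne_zero (by norm_num) Real.pi_ne_zero) hx)) Complex.I_ne_zero
    rw [integral_exp_mul_complex hc]
    have e1 : (↑(-2 * π * x) : ℂ) * Complex.I * (↑(a+1) : ℝ)
        = (-(π * (2*a+1) * x) : ℝ) * Complex.I + ((-(π * x) : ℝ)) * Complex.I := by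
      push_cast; ring
    have e2 : (↑(-2 * π * x) : ℂ) * Complex.I * (↑a : ℝ)
        = (-(π * (2*a+1) * x) : ℝ) * Complex.I + (((π * x) : ℝ)) * Complex.I := by
      push_cast; ring
    rw [e1, e2, Complex.exp_add, Complex.exp_add]
    have key : Complex.exp ((-(π * x) : ℝ) * Complex.I) - Complex.exp (((π * x) : ℝ) * Complex.I)
        = -2 * (Real.sin (π * x) : ℂ) * Complex.I := by
      rw [Complex.exp_mul_I, Complex.exp_mul_I, ← Complex.ofReal_sin, ← Complex.ofReal_cos,
        ← Complex.ofReal_sin, ← Complex.ofReal_cos, Real.sin_neg, Real.cos_neg]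
      push_cast; ring
    rw [sincg, if_neg hx, div_eq_iff hc]
    have expand : Complex.exp ((-(π * (2*a+1) * x) : ℝ) * Complex.I) *
          Complex.exp ((-(π * x) : ℝ) * Complex.I) -
        Complex.exp ((-(π * (2*a+1) * x) : ℝ) * Complex.I) *
          Complex.exp (((π * x) : ℝ) * Complex.I)
        = Complex.exp ((-(π * (2*a+1) * x) : ℝ) * Complex.I) *
          (Complex.exp ((-(π * x) : ℝ) * Complex.I) -
            Complex.exp (((π * x) : ℝ) * Complex.I)) := by ring
    rw [expand, key]
    have hπxC : ((π : ℂ) * x) ≠ 0 := by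
      exact_mod_cast Complex.ofReal_ne_zero.2 hπx
    push_cast
    field_simp
    rw [mul_div_cancel_left₀ _ (Complex.ofReal_ne_zero.2 hx)]

lemma fourier_gauss (r : ℝ) (hr : 0 < r) (x : ℝ) :
    𝓕 (fun t : ℝ => (Real.sqrt (2*π*r^2) : ℂ) * Complex.exp (-(π : ℂ) * (2*π*r^2) * t^2)) x
      = ((Real.exp (-(x^2 / (2*r^2))) : ℝ) : ℂ) := by
  have hb : (0:ℝ) < 2*π*r^2 := by positivity
  have h1 : (fun t : ℝ => (Real.sqrt (2*π*r^2) : ℂ) * Complex.exp (-(π : ℂ) * (2*π*r^2) * t^2))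
      = (Real.sqrt (2*π*r^2) : ℂ) • (fun t : ℝ => Complex.exp (-(π : ℂ) * ((2*π*r^2 : ℝ) : ℂ) * t^2)) := by
    funext t; push_cast; simp [smul_eq_mul]
  rw [h1]
  rw [show (𝓕 ((Real.sqrt (2*π*r^2) : ℂ) • fun t : ℝ => Complex.exp (-(π : ℂ) * ((2*π*r^2 : ℝ) : ℂ) * t^2)))
      = (Real.sqrt (2*π*r^2) : ℂ) • 𝓕 (fun t : ℝ => Complex.exp (-(π : ℂ) * ((2*π*r^2 : ℝ) : ℂ) * t^2)) from
    VectorFourier.fourierIntegral_const_smul _ _ _ _ _]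
  rw [fourier_gaussian_pi (b := ((2*π*r^2 : ℝ) : ℂ)) (by rw [Complex.ofReal_re]; exact hb)]
  simp only [Pi.smul_apply, smul_eq_mul]
  have hsq : (((2*π*r^2 : ℝ) : ℂ)) ^ (1/2 : ℂ) = (Real.sqrt (2*π*r^2) : ℂ) := by
    rw [Real.sqrt_eq_rpow, Complex.ofReal_cpow hb.le]
    push_cast
    norm_num
  rw [hsq]
  have hs0 : (Real.sqrt (2*π*r^2) : ℂ) ≠ 0 := by
    exact_mod_cast Complex.ofReal_ne_zero.2 (Real.sqrt_ne_zero'.2 hb)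
  have harg : -(π:ℂ) / ((2*π*r^2 : ℝ) : ℂ) * (x:ℂ)^2 = ((-(x^2 / (2*r^2)) : ℝ) : ℂ) := by
    have hπ : (π:ℂ) ≠ 0 := Complex.ofReal_ne_zero.2 Real.pi_ne_zero
    have hrC : (r:ℂ) ≠ 0 := Complex.ofReal_ne_zero.2 hr.ne'
    push_cast
    field_simp
  rw [harg, Complex.ofReal_exp, ← mul_assoc, mul_one_div, div_self hs0, one_mul]

lemma fourier_conv (u g : ℝ → ℂ) (hu : Integrable u) (hg : Integrable g) (x : ℝ) :
    𝓕 (fun ξ => ∫ t, u t * g (ξ - t)) x = 𝓕 u x * 𝓕 g x := by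
  have hprod : Integrable (fun p : ℝ × ℝ => u p.2 * g (p.1 - p.2)) (volume.prod volume) := by
    simpa using hu.convolution_integrand (ContinuousLinearMap.mul ℝ ℂ) hg
  have hcont : Continuous (fun p : ℝ × ℝ => (𝐞 (-(p.1 * x)) : Circle)) :=
    Real.continuous_fourierChar.comp ((continuous_fst.mul continuous_const).neg)
  have hprod2 : Integrable
      (fun p : ℝ × ℝ => (𝐞 (-(p.1 * x)) : Circle) • (u p.2 * g (p.1 - p.2)))
      (volume.prod volume) := by
    refine hprod.norm.mono' (hcont.aestronglyMeasurable.smul hprod.1) ?_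
    filter_upwards with p
    rw [Circle.norm_smul]
  calc 𝓕 (fun ξ => ∫ t, u t * g (ξ - t)) x
      = ∫ ξ, (𝐞 (-(ξ * x)) : Circle) • ∫ t, u t * g (ξ - t) :=
        Real.fourier_real_eq _ x
    _ = ∫ ξ, ∫ t, (𝐞 (-(ξ * x)) : Circle) • (u t * g (ξ - t)) := by
        congr 1; funext ξ
        simp only [Circle.smul_def, smul_eq_mul]
        rw [integral_const_mul]
    _ = ∫ t, ∫ ξ, (𝐞 (-(ξ * x)) : Circle) • (u t * g (ξ - t)) := by
        exact integral_integral_swap hprod2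
    _ = ∫ t, u t * (((𝐞 (-(t * x)) : Circle) : ℂ) * 𝓕 g x) := by
        congr 1; funext t
        have step1 : (fun ξ : ℝ => (𝐞 (-(ξ * x)) : Circle) • (u t * g (ξ - t)))
            = fun ξ : ℝ => u t * ((𝐞 (-(ξ * x)) : Circle) • g (ξ - t)) := by
          funext ξ; simp only [Circle.smul_def, smul_eq_mul]; ring
        rw [step1, integral_const_mul]
        congr 1
        have step2 : (fun ξ : ℝ => (𝐞 (-(ξ * x)) : Circle) • g (ξ - t))
            = fun ξ : ℝ => (fun v : ℝ => ((𝐞 (-(t * x)) : Circle) : ℂ) *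
                ((𝐞 (-(v * x)) : Circle) • g v)) (ξ - t) := by
          funext ξ
          simp only [Circle.smul_def, smul_eq_mul, ← mul_assoc, ← Circle.coe_mul,
            ← AddChar.map_add_eq_mul]
          congr 3
          ring
        rw [step2, integral_sub_right_eq_self (fun v : ℝ => ((𝐞 (-(t * x)) : Circle) : ℂ) *
          ((𝐞 (-(v * x)) : Circle) • g v)) t, integral_const_mul, Real.fourier_real_eq]
    _ = (∫ t, (𝐞 (-(t * x)) : Circle) • u t) * 𝓕 g x := by
        rw [← integral_mul_const]
        congr 1; funext t
        simp only [Circle.smul_def, smul_eq_mul]; ring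
    _ = 𝓕 u x * 𝓕 g x := by rw [Real.fourier_real_eq u x]

lemma indicator_icc_integrable (a : ℝ) :
    Integrable ((Set.Icc a (a+1)).indicator (fun _ : ℝ => (1:ℂ))) := by
  rw [integrable_indicator_iff measurableSet_Icc]
  exact integrableOn_const (by simp [Real.volume_Icc])

theorem stmt18 (r : ℝ) (hr : 0 < r)
    (G : ℝ → ℝ)
    (hG : ∀ ν : ℝ, G ν = ∫ η in (0:ℝ)..ν, sincg η * Real.exp (-(η^2 / (2 * r^2))))
    (F : ℝ → ℂ)
    (hF : ∀ ω : ℝ, F ω = ∫ x : ℝ, ((sincg x * Real.exp (-(x^2 / (2 * r^2))) : ℝ) : ℂ) *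
        Complex.exp (-Complex.I * ω * x)) :
    ∀ k : ℤ,
      Integrable (fun ω : ℝ => F ω * (sincg (ω / (2 * Real.pi)) : ℝ) *
        Complex.exp (Complex.I * ω / 2) * Complex.exp (Complex.I * k * ω)) ∧
      ((G (k + 1) - G k : ℝ) : ℂ)
        = (1 / (2 * Real.pi)) *
          ∫ ω : ℝ, F ω * (sincg (ω / (2 * Real.pi)) : ℝ) *
            Complex.exp (Complex.I * ω / 2) * Complex.exp (Complex.I * k * ω) := by
  have hπ : (0:ℝ) < π := Real.pi_pos
  have hπC : (π : ℂ) ≠ 0 := Complex.ofReal_ne_zero.2 Real.pi_ne_zero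
  -- the gaussian kernel
  set g : ℝ → ℂ := fun t => (Real.sqrt (2*π*r^2) : ℂ) * Complex.exp (-(π : ℂ) * (2*π*r^2) * t^2)
    with hg_def
  have hb : (0:ℝ) < 2*π*r^2 := by positivity
  have hg_real : ∀ t : ℝ, g t
      = ((Real.sqrt (2*π*r^2) * Real.exp (-(π * (2*π*r^2)) * t^2) : ℝ) : ℂ) := by
    intro t
    rw [hg_def]
    push_cast
    ring_nf
  have hg_int : Integrable g := by
    have : Integrable (fun t : ℝ => Real.sqrt (2*π*r^2) * Real.exp (-(π * (2*π*r^2)) * t^2)) :=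
      (integrable_exp_neg_mul_sq (by positivity)).const_mul _
    have h2 := this.ofReal (𝕜 := ℂ)
    apply h2.congr
    filter_upwards with t
    rw [hg_real t]
    norm_cast
  have hg_cont : Continuous g := by
    apply continuous_const.mul
    exact Complex.continuous_exp.comp (by continuity)
  have hg_bdd : BddAbove (Set.range fun t : ℝ => ‖g t‖) := by
    refine ⟨Real.sqrt (2*π*r^2), ?_⟩
    rintro y ⟨t, rfl⟩
    show ‖g t‖ ≤ Real.sqrt (2*π*r^2)
    rw [hg_real t, Complex.norm_real, Real.norm_eq_abs, abs_mul,
      _root_.abs_of_nonneg (Real.sqrt_nonneg _), Real.abs_exp]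
    nlinarith [Real.exp_le_one_iff.2 (show -(π * (2*π*r^2)) * t^2 ≤ 0 by nlinarith [mul_nonneg (mul_pos hπ hb).le (sq_nonneg t)]),
      Real.exp_pos (-(π * (2*π*r^2)) * t^2), Real.sqrt_nonneg (2*π*r^2)]
  -- the indicator of [-1/2, 1/2]
  set u : ℝ → ℂ := (Set.Icc (-(1/2) : ℝ) (-(1/2)+1)).indicator (fun _ : ℝ => (1:ℂ)) with hu_def
  have hu_int : Integrable u := indicator_icc_integrable _
  -- φ = u ⋆ g
  set φ : ℝ → ℂ := fun x => ∫ t, u t * g (x - t) with hφ_def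
  have hφ_conv : φ = u ⋆[ContinuousLinearMap.mul ℝ ℂ] g := by
    funext x
    rw [hφ_def, convolution_def]
    rfl
  have hφ_int : Integrable φ := by
    rw [hφ_conv]; exact hu_int.integrable_convolution _ hg_int
  have hφ_cont : Continuous φ := by
    rw [hφ_conv]; exact hg_bdd.continuous_convolution_right_of_integrable (ContinuousLinearMap.mul ℝ ℂ) hu_int hg_cont
  -- 𝓕 φ = sinc-gauss
  have hFφ : 𝓕 φ = fun x : ℝ => ((sincg x * Real.exp (-(x^2 / (2 * r^2))) : ℝ) : ℂ) := by
    funext x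
    rw [hφ_def]
    rw [fourier_conv u g hu_int hg_int x, hu_def, fourier_icc (-(1/2)) x,
      fourier_gauss r hr x]
    norm_num
  have hf_int_real : Integrable (fun x : ℝ => sincg x * Real.exp (-(x^2 / (2 * r^2)))) := by
    refine Integrable.mono' (g := fun x : ℝ => Real.exp (-(1/(2*r^2)) * x^2))
      (integrable_exp_neg_mul_sq (by positivity)) ?_ ?_
    · exact (measurable_sincg.mul
        ((measurable_id.pow_const 2).div_const (2*r^2)).neg.exp).aestronglyMeasurable
    · filter_upwards with x
      rw [Real.norm_eq_abs, abs_mul, Real.abs_exp]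
      have : -(x^2 / (2 * r^2)) = -(1/(2*r^2)) * x^2 := by ring
      rw [this]
      nlinarith [abs_sincg_le_one x, Real.exp_pos (-(1/(2*r^2)) * x^2)]
  have hf_int : Integrable (fun x : ℝ => ((sincg x * Real.exp (-(x^2 / (2 * r^2))) : ℝ) : ℂ)) :=
    hf_int_real.ofReal
  -- F in terms of φ
  have hFform : ∀ ω : ℝ, F ω = φ (-(ω / (2*π))) := by
    intro ω
    have h1 : F ω = 𝓕 (fun x : ℝ => ((sincg x * Real.exp (-(x^2 / (2 * r^2))) : ℝ) : ℂ))
        (ω / (2*π)) := by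
      rw [hF, Real.fourier_real_eq_integral_exp_smul]
      congr 1
      funext v
      rw [smul_eq_mul, mul_comm]
      congr 1
      congr 1
      push_cast
      field_simp
    have hinv : 𝓕⁻ (𝓕 φ) = φ := hφ_cont.fourierInv_fourier_eq hφ_int (by rw [hFφ]; exact hf_int)
    rw [h1, ← hFφ]
    rw [show 𝓕 (𝓕 φ) (ω / (2*π)) = 𝓕⁻ (𝓕 φ) (-(ω / (2*π))) by
      rw [fourierInv_eq_fourier_neg, neg_neg]]
    rw [hinv]
  -- main part
  intro k
  set J : Set ℝ := Set.Icc (k:ℝ) ((k:ℝ)+1) with hJ_def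
  set w : ℝ → ℂ := J.indicator (fun _ : ℝ => (1:ℂ)) with hw_def
  have hw_int : Integrable w := indicator_icc_integrable _
  have hFw_cont : Continuous (𝓕 w) :=
    VectorFourier.fourierIntegral_continuous Real.continuous_fourierChar
      (by exact continuous_inner) hw_int
  have hFw_bdd : ∀ x : ℝ, ‖𝓕 w x‖ ≤ ∫ v : ℝ, ‖w v‖ := fun x =>
    VectorFourier.norm_fourierIntegral_le_integral_norm _ _ _ _ _
  set g0 : ℝ → ℂ := fun x => 𝓕 w x * φ x with hg0_def
  have hg0_int : Integrable g0 :=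
    hφ_int.bdd_mul hFw_cont.aestronglyMeasurable (Filter.Eventually.of_forall hFw_bdd)
  have hc : ((-(2*π))⁻¹ : ℝ) ≠ 0 := by
    simp [Real.pi_ne_zero]
  -- pointwise identification of the integrand
  have hpt : ∀ ω : ℝ, F ω * (sincg (ω / (2 * π)) : ℝ) *
      Complex.exp (Complex.I * ω / 2) * Complex.exp (Complex.I * k * ω)
      = g0 ((-(2*π))⁻¹ * ω) := by
    intro ω
    have harg : ((-(2*π))⁻¹ : ℝ) * ω = -(ω / (2*π)) := by
      field_simp
    simp only [hg0_def, harg]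
    rw [hw_def, hJ_def, fourier_icc (k:ℝ) (-(ω / (2*π))), hFform ω, sincg_even]
    have hexp : Complex.exp ((-(π * (2*(k:ℝ)+1) * (-(ω / (2*π)))) : ℝ) * Complex.I)
        = Complex.exp (Complex.I * ω / 2) * Complex.exp (Complex.I * (k:ℝ) * ω) := by
      rw [← Complex.exp_add]
      congr 1
      have : (-(π * (2*(k:ℝ)+1) * (-(ω / (2*π)))) : ℝ) = ω/2 + (k:ℝ)*ω := by
        field_simp
        ring
      rw [this]
      push_cast
      ring
    rw [hexp]
    push_cast
    ring
  have hpt' : (fun ω : ℝ => F ω * (sincg (ω / (2 * π)) : ℝ) *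
      Complex.exp (Complex.I * ω / 2) * Complex.exp (Complex.I * k * ω))
      = fun ω : ℝ => g0 ((-(2*π))⁻¹ * ω) := funext hpt
  constructor
  · rw [hpt']
    exact (integrable_comp_mul_left_iff g0 hc).2 hg0_int
  · -- the right-hand side
    have hRHS : ∫ ω : ℝ, F ω * (sincg (ω / (2 * π)) : ℝ) *
        Complex.exp (Complex.I * ω / 2) * Complex.exp (Complex.I * k * ω)
        = (2*π : ℝ) • ∫ x : ℝ, g0 x := by
      rw [hpt', MeasureTheory.Measure.integral_comp_mul_left g0 ((-(2*π))⁻¹)]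
      congr 1
      rw [inv_inv, abs_neg, abs_of_pos (by positivity)]
    -- multiplication formula
    have hflipL : (innerₗ ℝ).flip = innerₗ ℝ := by
      apply LinearMap.ext; intro x; apply LinearMap.ext; intro y
      simp only [LinearMap.flip_apply]
      exact real_inner_comm x y
    have hmul : ∫ ξ : ℝ, 𝓕 φ ξ * w ξ = ∫ x : ℝ, φ x * 𝓕 w x := by
      have := VectorFourier.integral_bilin_fourierIntegral_eq_flip
        (E := ℂ) (F := ℂ) (G := ℂ) (μ := volume) (ν := volume) (L := innerₗ ℝ)
        (ContinuousLinearMap.mul ℂ ℂ) Real.continuous_fourierChar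
        (by exact continuous_inner) hφ_int hw_int
      rw [hflipL] at this
      simp at this
      exact this
    -- the left-hand side
    have hGdiff : G ((k:ℝ) + 1) - G (k:ℝ)
        = ∫ η in (k:ℝ)..((k:ℝ)+1), sincg η * Real.exp (-(η^2 / (2 * r^2))) := by
      rw [hG, hG, ← intervalIntegral.integral_add_adjacent_intervals
        (a := (0:ℝ)) (b := (k:ℝ)) (c := (k:ℝ)+1)
        hf_int_real.intervalIntegrable hf_int_real.intervalIntegrable]
      ring
    have hLHS : ((G ((k:ℝ) + 1) - G (k:ℝ) : ℝ) : ℂ) = ∫ ξ : ℝ, 𝓕 φ ξ * w ξ := by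
      rw [hGdiff, ← intervalIntegral.integral_ofReal]
      rw [intervalIntegral.integral_of_le (by linarith : (k:ℝ) ≤ (k:ℝ)+1),
        ← MeasureTheory.integral_Icc_eq_integral_Ioc, ← integral_indicator measurableSet_Icc]
      congr 1
      funext ξ
      rw [hFφ, hw_def, hJ_def]
      simp only [Set.indicator_apply]
      push_cast
      split <;> simp
    calc ((G ((k:ℝ) + 1) - G (k:ℝ) : ℝ) : ℂ)
        = ∫ ξ : ℝ, 𝓕 φ ξ * w ξ := hLHS
      _ = ∫ x : ℝ, φ x * 𝓕 w x := hmul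
      _ = ∫ x : ℝ, g0 x := by congr 1; funext x; rw [hg0_def]; ring
      _ = (1 / (2 * (π:ℝ))) * ∫ ω : ℝ, F ω * (sincg (ω / (2 * π)) : ℝ) *
            Complex.exp (Complex.I * ω / 2) * Complex.exp (Complex.I * k * ω) := by
          rw [hRHS, real_smul]
          push_cast
          rw [← mul_assoc]
          rw [show (1 / (2 * (π:ℂ))) * (2*(π:ℂ)) = 1 by field_simp]
          rw [one_mul]
end
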